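/- Suppose n_C ≥ n_B ≥ 1 and f*: B → C* is a non-decreasing function, where B = {−(n_B−1)/2, −(n_B−3)/2, ..., (n_B−1)/2} and C* = {−n_C/2, −n_C/2 + 1, ..., n_C/2}. Then for every integer q ≥ 0, the number of b ∈ B with |b − f*(b)| ≥ (n_B + n_C − 1)/2 − q is at most q + 1. -/

import Mathlib

/-- With `B = {−(n_B−1)/2, …, (n_B−1)/2}` (indexed by `Fin n_B` via
`i ↦ i − (n_B−1)/2`) and `C* = {−n_C/2, …, n_C/2}`, if `n_C ≥ n_B ≥ 1` and
`f* : B → C*` is non-decreasing, then for every integer `q ≥ 0` the number of `b ∈ B`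
with `|b − f*(b)| ≥ (n_B + n_C − 1)/2 − q` is at most `q + 1`. -/
theorem block_intertwining_count_bound
    (nB nC : ℕ) (hnB : 1 ≤ nB) (hBC : nB ≤ nC)
    (f : Fin nB → ℝ)
    (hrange : ∀ i, ∃ m : ℕ, m ≤ nC ∧ f i = (m : ℝ) - (nC : ℝ) / 2)
    (hmono : Monotone f) (q : ℕ) :
    {i : Fin nB |
        |((i : ℝ) - ((nB : ℝ) - 1) / 2) - f i| ≥ ((nB : ℝ) + (nC : ℝ) - 1) / 2 - q}.ncard
      ≤ q + 1 := by
  classical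
  by_cases hq : nB ≤ q + 1
  · calc {i : Fin nB |
        |((i : ℝ) - ((nB : ℝ) - 1) / 2) - f i| ≥ ((nB : ℝ) + (nC : ℝ) - 1) / 2 - q}.ncard
        ≤ (Set.univ : Set (Fin nB)).ncard :=
          Set.ncard_le_ncard (Set.subset_univ _) Set.finite_univ
      _ = nB := by simp [Set.ncard_univ]
      _ ≤ q + 1 := hq
  push_neg at hq
  choose m hmle hmf using hrange
  have hmmono : ∀ i j : Fin nB, i ≤ j → (m i : ℤ) ≤ m j := by
    intro i j hij
    have h := hmono hij
    rw [hmf i, hmf j] at h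
    have h' : (m i : ℝ) ≤ m j := by linarith
    exact_mod_cast h'
  -- characterize membership
  have hchar : ∀ i : Fin nB,
      (|((i : ℝ) - ((nB : ℝ) - 1) / 2) - f i| ≥ ((nB : ℝ) + (nC : ℝ) - 1) / 2 - q)
      ↔ ((m i : ℤ) ≤ (i : ℤ) - ((nB : ℤ) - 1) + q ∨ (nC : ℤ) - q + i ≤ m i) := by
    intro i
    rw [hmf i, ge_iff_le, le_abs]
    constructor
    · rintro (h | h)
      · left
        have h' : (m i : ℝ) ≤ (i : ℝ) - ((nB : ℝ) - 1) + q := by linarith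
        exact_mod_cast h'
      · right
        have h' : (nC : ℝ) - q + i ≤ m i := by linarith
        exact_mod_cast h'
    · rintro (h | h)
      · left
        have h' : (m i : ℝ) ≤ (i : ℝ) - ((nB : ℝ) - 1) + q := by exact_mod_cast h
        linarith
      · right
        have h' : (nC : ℝ) - q + i ≤ m i := by exact_mod_cast h
        linarith
  set T : Finset (Fin nB) := Finset.univ.filter
    (fun i => (m i : ℤ) ≤ (i : ℤ) - ((nB : ℤ) - 1) + q ∨ (nC : ℤ) - q + i ≤ m i) with hT
  have hset : {i : Fin nB |
      |((i : ℝ) - ((nB : ℝ) - 1) / 2) - f i| ≥ ((nB : ℝ) + (nC : ℝ) - 1) / 2 - q} = ↑T := by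
    ext i
    simp only [Set.mem_setOf_eq, hT, Finset.coe_filter, Finset.mem_univ, true_and]
    exact hchar i
  rw [hset, Set.ncard_coe_finset]
  have := Finset.card_le_card_of_injOn
    (f := fun i : Fin nB => if (nC : ℤ) - q + i ≤ m i then (i : ℕ) else (i : ℕ) - (nB - 1 - q))
    (s := T) (t := Finset.range (q + 1)) ?_ ?_
  · simpa using this
  · -- maps into range (q+1)
    intro i hi
    simp only [Finset.mem_coe, hT, Finset.mem_filter, Finset.mem_univ, true_and] at hi
    simp only [Finset.mem_coe, Finset.mem_range]
    split_ifs with hN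
    · -- N case : i ≤ q since m i ≤ nC
      have h1 := hmle i
      omega
    · -- P case
      rcases hi with hP | hN' 
      · have hiv : (i : ℕ) < nB := i.isLt
        omega
      · exact absurd hN' hN
  · -- injectivity
    intro i hi j hj hij
    simp only [Finset.mem_coe, hT, Finset.mem_filter, Finset.mem_univ, true_and] at hi hj
    simp only at hij
    have hiv : (i : ℕ) < nB := i.isLt
    have hjv : (j : ℕ) < nB := j.isLt
    split_ifs at hij with hNi hNj hNj
    · exact Fin.ext hij
    · -- i in N, j in P
      have hPj : (m j : ℤ) ≤ (j : ℤ) - ((nB : ℤ) - 1) + q := hj.resolve_right hNj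
      -- from m j ≥ 0 : j ≥ nB - 1 - q, so j = i + (nB-1-q) > i (as nB-1-q ≥ 1)
      have hjge : nB - 1 - q ≤ (j : ℕ) := by omega
      have hji : (j : ℕ) = (i : ℕ) + (nB - 1 - q) := by omega
      have hlt : i ≤ j := by
        rw [Fin.le_def]; omega
      have hmono' := hmmono i j hlt
      exfalso
      omega
    · -- i in P, j in N (symmetric)
      have hPi : (m i : ℤ) ≤ (i : ℤ) - ((nB : ℤ) - 1) + q := hi.resolve_right hNi
      have hige : nB - 1 - q ≤ (i : ℕ) := by omega
      have hij' : (i : ℕ) = (j : ℕ) + (nB - 1 - q) := by omega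
      have hlt : j ≤ i := by
        rw [Fin.le_def]; omega
      have hmono' := hmmono j i hlt
      exfalso
      omega
    · -- both in P
      have hPi : (m i : ℤ) ≤ (i : ℤ) - ((nB : ℤ) - 1) + q := by tauto
      have hPj : (m j : ℤ) ≤ (j : ℤ) - ((nB : ℤ) - 1) + q := hj.resolve_right hNj
      have hige : nB - 1 - q ≤ (i : ℕ) := by omega
      have hjge : nB - 1 - q ≤ (j : ℕ) := by omega
      exact Fin.ext (by omega)
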